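/- For every positive integer i, there exist positive integers C_i and n_i such that for every positive integer λ, there exist nonnegative integers a₁, ..., a_{n_i} and r with λ = a₁^i + ... + a_{n_i}^i + r and r ≤ C_i · λ^{1/i}. -/

import Mathlib

lemma binom_lb (x k : ℕ) : x^(k+1) + (k+1)*x^k ≤ (x+1)^(k+1) := by
  induction k with
  | zero => simp
  | succ k ih =>
    calc x^(k+2) + (k+2)*x^(k+1)
        ≤ (x^(k+1) + (k+1)*x^k) * (x+1) := by ring_nf; nlinarith [pow_nonneg (Nat.zero_le x) k, Nat.zero_le (x^k)]
      _ ≤ (x+1)^(k+1) * (x+1) := Nat.mul_le_mul_right _ ih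
      _ = (x+1)^(k+2) := by ring

lemma greedy (i : ℕ) (hi : 1 ≤ i) (lam : ℕ) (hlam : 1 ≤ lam) :
    ∃ a r : ℕ, lam = a^i + r ∧ r < lam ∧ r^i ≤ 2^(i*i) * lam^(i-1) := by
  set a := Nat.findGreatest (fun a => a^i ≤ lam) lam with ha
  have ha1 : 1 ≤ a := Nat.le_findGreatest (P := fun a => a^i ≤ lam) hlam (by simpa using hlam)
  have hale : a^i ≤ lam :=
    Nat.findGreatest_spec (P := fun a => a^i ≤ lam) (m := 1) hlam (by simpa using hlam)
  have hlt : lam < (a+1)^i := by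
    by_contra h
    push_neg at h
    have h1 : a + 1 ≤ lam := le_trans (Nat.le_self_pow (by omega) _) h
    have := Nat.le_findGreatest (P := fun a => a^i ≤ lam) h1 h
    omega
  have hbin : (a+1)^i ≤ a^i + 2^i * a^(i-1) := by
    have hexp : (a+1)^i = ∑ j ∈ Finset.range (i+1), a^j * 1^(i-j) * i.choose j := add_pow a 1 i
    rw [hexp, Finset.sum_range_succ]
    simp only [one_pow, mul_one, Nat.choose_self]
    rw [Nat.add_comm]
    gcongr
    calc ∑ j ∈ Finset.range i, a^j * i.choose j
        ≤ ∑ j ∈ Finset.range i, a^(i-1) * i.choose j := by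
          apply Finset.sum_le_sum
          intro j hj
          simp only [Finset.mem_range] at hj
          exact Nat.mul_le_mul_right _ (Nat.pow_le_pow_right ha1 (by omega))
      _ = a^(i-1) * ∑ j ∈ Finset.range i, i.choose j := by rw [Finset.mul_sum]
      _ ≤ a^(i-1) * ∑ j ∈ Finset.range (i+1), i.choose j := by
          exact Nat.mul_le_mul_left _
            (Finset.sum_le_sum_of_subset (Finset.range_subset_range.2 (Nat.le_succ i)))
      _ = a^(i-1) * 2^i := by rw [Nat.sum_range_choose]
      _ = 2^i * a^(i-1) := by ring
  refine ⟨a, lam - a^i, by omega, ?_, ?_⟩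
  · have : 1 ≤ a^i := Nat.one_le_pow _ _ (by omega)
    omega
  · have hr : lam - a^i ≤ 2^i * a^(i-1) := by omega
    calc (lam - a^i)^i ≤ (2^i * a^(i-1))^i := Nat.pow_le_pow_left hr i
      _ = 2^(i*i) * (a^i)^(i-1) := by rw [mul_pow, ← pow_mul, ← pow_mul]; ring_nf
      _ ≤ 2^(i*i) * lam^(i-1) := by gcongr

lemma iterDecomp (i : ℕ) (hi : 1 ≤ i) (k : ℕ) :
    ∃ C n : ℕ, 0 < C ∧ 0 < n ∧ ∀ lam : ℕ, 1 ≤ lam →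
      ∃ (a : Fin n → ℕ) (r : ℕ),
        lam = (∑ j, a j ^ i) + r ∧ r^(i^k) ≤ C * lam^((i-1)^k) := by
  induction k with
  | zero =>
    refine ⟨1, 1, one_pos, one_pos, fun lam hlam => ⟨fun _ => 0, lam, ?_, by simp⟩⟩
    simp [Nat.zero_pow (show 0 < i by omega)]
  | succ k ih =>
    obtain ⟨C, n, hC, hn, hdec⟩ := ih
    refine ⟨C^i * 2^((i*i) * (i-1)^k), n+1, by positivity, by omega, fun lam hlam => ?_⟩
    obtain ⟨a0, r1, hsplit, _, hr1⟩ := greedy i hi lam hlam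
    rcases Nat.eq_zero_or_pos r1 with h0 | hpos
    · refine ⟨Fin.cons a0 (fun _ => 0), 0, ?_, ?_⟩
      · rw [Fin.sum_univ_succ]
        simp [hsplit, h0, Nat.zero_pow (show 0 < i by omega)]
      · have hz : (0:ℕ)^(i^(k+1)) = 0 := Nat.zero_pow (by positivity)
        rw [hz]
        exact Nat.zero_le _
    · obtain ⟨b, r2, hsplit2, hr2⟩ := hdec r1 hpos
      refine ⟨Fin.cons a0 b, r2, ?_, ?_⟩
      · rw [Fin.sum_univ_succ]
        simp only [Fin.cons_zero, Fin.cons_succ]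
        rw [hsplit, hsplit2]; ring
      · calc r2^(i^(k+1)) = (r2^(i^k))^i := by rw [← pow_mul, ← pow_succ]
          _ ≤ (C * r1^((i-1)^k))^i := Nat.pow_le_pow_left hr2 i
          _ = C^i * (r1^i)^((i-1)^k) := by rw [mul_pow, ← pow_mul, ← pow_mul]; ring_nf
          _ ≤ C^i * (2^(i*i) * lam^(i-1))^((i-1)^k) := by gcongr
          _ = C^i * 2^((i*i)*(i-1)^k) * lam^((i-1)^(k+1)) := by
              rw [mul_pow, ← pow_mul, ← pow_mul, ← pow_succ']; ring


lemma exp_ineq (i : ℕ) (hi : 1 ≤ i) : i * (i-1)^((i-1)^2+1) ≤ i^((i-1)^2+1) := by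
  set x := i - 1 with hx
  have hix : i = x + 1 := by omega
  rcases Nat.eq_zero_or_pos x with h0 | hpos
  · rw [hix, h0]; simp
  · set m := x^2 with hm
    calc i * x^(m+1) = x^(m+1) + x^m * x^2 := by rw [hix]; ring
      _ ≤ x^(m+1) + (m+1) * x^m := by
          have h2 : x^m * x^2 ≤ (m+1) * x^m := by
            rw [mul_comm]
            exact Nat.mul_le_mul_right _ (by omega)
          exact Nat.add_le_add_left h2 _
      _ ≤ (x+1)^(m+1) := binom_lb x m
      _ = i^(m+1) := by rw [hix]

lemma nat_to_real (i C lam r : ℕ) (hi : 1 ≤ i) (hC : 1 ≤ C) (hlam : 1 ≤ lam)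
    (h : r^i ≤ C * lam) : (r : ℝ) ≤ (C : ℝ) * (lam : ℝ) ^ ((1 : ℝ) / i) := by
  have hi' : (i : ℝ) ≠ 0 := by positivity
  have h1 : ((r:ℝ))^(i:ℕ) ≤ (C:ℝ) * (lam:ℝ) := by exact_mod_cast h
  have hr0 : (0:ℝ) ≤ (r:ℝ) := Nat.cast_nonneg r
  have key : (r:ℝ) = (((r:ℝ)^(i:ℕ))) ^ ((1:ℝ)/i) := by
    rw [← Real.rpow_natCast (r:ℝ) i, ← Real.rpow_mul hr0, mul_one_div, div_self hi',
      Real.rpow_one]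
  rw [key]
  calc (((r:ℝ)^(i:ℕ))) ^ ((1:ℝ)/i)
      ≤ ((C:ℝ) * (lam:ℝ)) ^ ((1:ℝ)/i) := by
        apply Real.rpow_le_rpow (by positivity) h1 (by positivity)
    _ = (C:ℝ)^((1:ℝ)/i) * (lam:ℝ)^((1:ℝ)/i) := Real.mul_rpow (by positivity) (by positivity)
    _ ≤ (C:ℝ) * (lam:ℝ)^((1:ℝ)/i) := by
        have h2 : (C:ℝ)^((1:ℝ)/i) ≤ (C:ℝ)^(1:ℝ) :=
          Real.rpow_le_rpow_of_exponent_le (by exact_mod_cast hC)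
            (by rw [div_le_one (by positivity)]; exact_mod_cast hi)
        rw [Real.rpow_one] at h2
        exact mul_le_mul_of_nonneg_right h2 (Real.rpow_nonneg (Nat.cast_nonneg _) _)

/-- For every positive integer `i` there exist positive integers `C` and `n` such that
every positive integer `lam` can be written as `a₁^i + ⋯ + aₙ^i + r` with nonnegative
integers `a₁, …, aₙ, r` and `r ≤ C * lam^(1/i)`. -/
theorem sum_of_ith_powers_decomposition (i : ℕ) (hi : 1 ≤ i) :
    ∃ C n : ℕ, 0 < C ∧ 0 < n ∧ ∀ lam : ℕ, 1 ≤ lam →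
      ∃ (a : Fin n → ℕ) (r : ℕ),
        lam = (∑ j, a j ^ i) + r ∧
        (r : ℝ) ≤ (C : ℝ) * (lam : ℝ) ^ ((1 : ℝ) / i) := by
  set k := (i-1)^2 + 1 with hk
  obtain ⟨C, n, hC, hn, hdec⟩ := iterDecomp i hi k
  refine ⟨C, n, hC, hn, fun lam hlam => ?_⟩
  obtain ⟨a, r, heq, hb⟩ := hdec lam hlam
  refine ⟨a, r, heq, ?_⟩
  set m := i^((i-1)^2) with hm
  have hm1 : 1 ≤ m := Nat.one_le_pow _ _ (by omega)
  have hik : i^k = i * m := by rw [hk, hm, pow_succ]; ring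
  have hexp : (i-1)^k ≤ m := by
    have h1 : i * (i-1)^k ≤ i * m := by rw [← hik]; exact exp_ineq i hi
    exact Nat.le_of_mul_le_mul_left h1 (by omega)
  have hri : r^i ≤ C * lam := by
    have h2 : (r^i)^m ≤ (C * lam)^m := by
      calc (r^i)^m = r^(i^k) := by rw [hik, ← pow_mul]
        _ ≤ C * lam^((i-1)^k) := hb
        _ ≤ C * lam^m := by gcongr
        _ ≤ C^m * lam^m := by gcongr; exact Nat.le_self_pow (by omega) C
        _ = (C * lam)^m := (mul_pow C lam m).symm
    exact (Nat.pow_le_pow_iff_left (by omega)).mp h2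
  exact nat_to_real i C lam r hi hC hlam hri
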